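/- Lemma (determinant formula for a weighted partition sum): for sets w̄ and ξ̄ with #w̄ = #ξ̄ = m and arbitrary functions C1, C2 of one complex variable, ∑ K_m({w̄_I - c, w̄_II} | ξ̄) f(ξ̄, w̄_I) f(w̄_II, w̄_I) C1(w̄_I) C2(w̄_II) = Δ'_m(ξ̄) Δ_m(w̄) det_m( C2(w_k) t(w_k, ξ_j) h(w_k, ξ̄) + (-1)^m C1(w_k) t(ξ_j, w_k) h(ξ̄, w_k) ), where the sum is over all partitions of w̄ into w̄_I and w̄_II, and all functions applied to sets mean products. -/
import Mathlib


open Finset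

noncomputable def gg (c u v : ℂ) : ℂ := c / (u - v)
noncomputable def ff (c u v : ℂ) : ℂ := (u - v + c) / (u - v)
noncomputable def hh (c u v : ℂ) : ℂ := (u - v + c) / c
noncomputable def tt (c u v : ℂ) : ℂ := gg c u v / hh c u v

/-- The domain wall partition function `K_m(ū|v̄)`. -/
noncomputable def KK (c : ℂ) {m : ℕ} (u v : Fin m → ℂ) : ℂ :=
  (∏ j, ∏ k ∈ univ.filter (fun k => j < k), gg c (u j) (u k)) *
  (∏ j, ∏ k ∈ univ.filter (fun k => k < j), gg c (v j) (v k)) *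
  (∏ j, ∏ k, hh c (u j) (v k)) *
  Matrix.det (Matrix.of fun j k => tt c (u j) (v k))

lemma tt_eq (c u v : ℂ) : tt c u v = c * c / ((u - v) * (u - v + c)) := by
  unfold tt gg hh
  rw [div_div_eq_mul_div, div_mul_eq_mul_div, div_div]

lemma tt_shift (c x y : ℂ) : tt c (x - c) y = tt c y x := by
  rw [tt_eq, tt_eq]
  congr 1
  ring

lemma det_split {m : ℕ} (a b : Fin m → ℂ) (r1 r2 : Fin m → Fin m → ℂ) :
    Matrix.det (Matrix.of fun k j => a k * r1 k j + b k * r2 k j)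
      = ∑ s : Finset (Fin m), (∏ k ∈ s, a k) * (∏ k ∈ sᶜ, b k) *
          Matrix.det (Matrix.of fun k j => if k ∈ s then r1 k j else r2 k j) := by
  classical
  have key := MultilinearMap.map_add_univ
    (Matrix.detRowAlternating (R := ℂ) (n := Fin m)).toMultilinearMap
    (fun k => a k • r1 k) (fun k => b k • r2 k)
  have hL : Matrix.det (Matrix.of fun k j => a k * r1 k j + b k * r2 k j)
      = (Matrix.detRowAlternating (R := ℂ) (n := Fin m)).toMultilinearMap
        ((fun k => a k • r1 k) + fun k => b k • r2 k) := rfl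
  rw [hL, key]
  refine Finset.sum_congr rfl fun s _ => ?_
  have hsp : s.piecewise (fun k => a k • r1 k) (fun k => b k • r2 k)
      = fun k => (if k ∈ s then a k else b k) • (fun j => if k ∈ s then r1 k j else r2 k j) := by
    funext k
    by_cases h : k ∈ s <;> simp [Finset.piecewise, h]
  rw [hsp, MultilinearMap.map_smul_univ]
  have hprod : (∏ k, (if k ∈ s then a k else b k)) = (∏ k ∈ s, a k) * (∏ k ∈ sᶜ, b k) := by
    rw [Finset.prod_ite]
    congr 1
    · congr 1; ext x; simp
    · congr 1; ext x; simp
  rw [hprod, smul_eq_mul]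
  rfl

lemma nested_to_pairs {m : ℕ} (f : Fin m → Fin m → ℂ) (p : Fin m → Fin m → Prop)
    [∀ j k, Decidable (p j k)] :
    (∏ j, ∏ k ∈ univ.filter (fun k => p j k), f j k)
      = ∏ q ∈ univ.filter (fun q : Fin m × Fin m => p q.1 q.2), f q.1 q.2 := by
  simp only [prod_filter]
  rw [← Fintype.prod_prod_type']

lemma sq_split {m : ℕ} (f : Fin m × Fin m → ℂ) :
    (∏ p : Fin m × Fin m, f p) =
      (∏ p ∈ univ.filter (fun p : Fin m × Fin m => p.1 < p.2), f p) *
      (∏ p ∈ univ.filter (fun p : Fin m × Fin m => p.1 < p.2), f p.swap) *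
      (∏ j, f (j, j)) := by
  rw [← prod_filter_mul_prod_filter_not univ (fun p : Fin m × Fin m => p.1 < p.2) f, mul_assoc]
  congr 1
  rw [← prod_filter_mul_prod_filter_not (univ.filter (fun p : Fin m × Fin m => ¬ p.1 < p.2))
    (fun p : Fin m × Fin m => p.2 < p.1) f]
  congr 1
  · rw [Finset.filter_filter]
    refine Finset.prod_nbij' Prod.swap Prod.swap ?_ ?_ ?_ ?_ ?_
    · intro q hq; simp only [mem_filter, mem_univ, true_and] at hq ⊢; exact hq.2
    · intro q hq; simp only [mem_filter, mem_univ, true_and] at hq ⊢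
      exact ⟨not_lt.mpr (le_of_lt hq), hq⟩
    · intro q _; simp
    · intro q _; simp
    · intro q _; rfl
  · rw [Finset.filter_filter]
    refine Finset.prod_nbij' (fun q => q.1) (fun j => (j, j)) ?_ ?_ ?_ ?_ ?_
    · intro q _; simp
    · intro j _; simp
    · intro q hq
      simp only [mem_filter, mem_univ, true_and, not_lt] at hq
      exact Prod.ext rfl (le_antisymm hq.2 hq.1)
    · intro j _; rfl
    · intro q hq
      simp only [mem_filter, mem_univ, true_and, not_lt] at hq
      have h : q.1 = q.2 := le_antisymm hq.2 hq.1
      rw [show q = (q.1, q.1) from Prod.ext rfl h.symm]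

lemma lower_eq {m : ℕ} (c : ℂ) (x : Fin m → ℂ) :
    (∏ j, ∏ k ∈ univ.filter (fun k => k < j), gg c (x j) (x k))
      = (∏ j, ∏ k ∈ univ.filter (fun k => (j : Fin m) < k), (-1 : ℂ)) *
        (∏ j, ∏ k ∈ univ.filter (fun k => j < k), gg c (x j) (x k)) := by
  rw [Finset.prod_comm' (t' := univ) (s' := fun k => univ.filter (fun j => k < j))
    (fun j k => by simp)]
  rw [← Finset.prod_mul_distrib]
  refine Finset.prod_congr rfl fun a _ => ?_
  rw [← Finset.prod_mul_distrib]
  refine Finset.prod_congr rfl fun b _ => ?_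
  unfold gg
  rw [show x b - x a = -(x a - x b) by ring, div_neg]
  ring

lemma expand_mem {m : ℕ} (T : Finset (Fin m)) (g : Fin m → ℂ) :
    (∏ i ∈ T, g i) = ∏ i, if i ∈ T then g i else 1 := by
  rw [Finset.prod_ite_mem, univ_inter]

-- Key crossing identity (1)

lemma lem_one {m : ℕ} (c : ℂ) (w : Fin m → ℂ) (S : Finset (Fin m))
    (hw : Function.Injective w) (h4 : ∀ k k', k ≠ k' → w k - w k' ≠ c)
    (u : Fin m → ℂ) (hu : ∀ i, u i = if i ∈ S then w i - c else w i) :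
    (∏ j, ∏ k ∈ univ.filter (fun k => j < k), gg c (u j) (u k)) *
      (∏ i ∈ Sᶜ, ∏ i' ∈ S, ff c (w i) (w i')) =
    ∏ j, ∏ k ∈ univ.filter (fun k => j < k), gg c (w j) (w k) := by
  classical
  have hF : (∏ i ∈ Sᶜ, ∏ i' ∈ S, ff c (w i) (w i'))
      = ∏ q : Fin m × Fin m, (if q.1 ∉ S ∧ q.2 ∈ S then ff c (w q.1) (w q.2) else 1) := by
    rw [Fintype.prod_prod_type'
      (f := fun i i' => if i ∉ S ∧ i' ∈ S then ff c (w i) (w i') else 1)]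
    rw [expand_mem]
    refine Finset.prod_congr rfl fun i _ => ?_
    by_cases hi : i ∈ S
    · simp [hi]
    · simp only [mem_compl, hi, not_false_iff, if_true]
      rw [expand_mem]
      refine Finset.prod_congr rfl fun i' _ => by simp [hi]
  rw [hF, sq_split, nested_to_pairs (fun j k => gg c (u j) (u k)),
    nested_to_pairs (fun j k => gg c (w j) (w k))]
  have hdiag : (∏ j : Fin m, (if (j, j).1 ∉ S ∧ (j, j).2 ∈ S then ff c (w (j, j).1) (w (j, j).2) else 1)) = 1 := by
    refine Finset.prod_eq_one fun j _ => by by_cases h : j ∈ S <;> simp [h]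
  rw [hdiag, mul_one, mul_comm, mul_assoc, ← Finset.prod_mul_distrib, ← Finset.prod_mul_distrib]
  refine Finset.prod_congr rfl fun q hq => ?_
  simp only [mem_filter, mem_univ, true_and] at hq
  have hne : q.1 ≠ q.2 := ne_of_lt hq
  have hwne : w q.1 - w q.2 ≠ 0 := sub_ne_zero.mpr fun h => hne (hw h)
  have hwne' : w q.2 - w q.1 ≠ 0 := sub_ne_zero.mpr fun h => hne.symm (hw h)
  have h12 : w q.1 - w q.2 - c ≠ 0 := sub_ne_zero.mpr (h4 q.1 q.2 hne)
  have h21 : w q.1 - w q.2 + c ≠ 0 := by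
    intro h
    exact h4 q.2 q.1 hne.symm (by linear_combination -h)
  simp only [Prod.fst_swap, Prod.snd_swap]
  have d12 : w q.1 - c - w q.2 ≠ 0 := fun h => h12 (by linear_combination h)
  have d21 : w q.1 - (w q.2 - c) ≠ 0 := fun h => h21 (by linear_combination h)
  by_cases hj : q.1 ∈ S <;> by_cases hk : q.2 ∈ S <;>
    simp only [hu, hj, hk, not_true_eq_false, not_false_eq_true, true_and, and_true,
      false_and, and_false, if_true, if_false, mul_one, one_mul]
  · unfold gg
    rw [show w q.1 - c - (w q.2 - c) = w q.1 - w q.2 by ring]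
  · unfold gg ff
    field_simp
    ring
  · unfold gg ff
    field_simp
    ring

-- identity (2)

lemma lem_two {m : ℕ} (c : ℂ) (hc : c ≠ 0) (w ξ : Fin m → ℂ) (S : Finset (Fin m))
    (h1 : ∀ k j, w k - ξ j ≠ 0)
    (u : Fin m → ℂ) (hu : ∀ i, u i = if i ∈ S then w i - c else w i) :
    (∏ j, ∏ l, hh c (u j) (ξ l)) * (∏ j, ∏ i ∈ S, ff c (ξ j) (w i)) =
    (∏ k ∈ Sᶜ, ∏ l, hh c (w k) (ξ l)) *
      ∏ k ∈ S, ((-1 : ℂ) ^ m * ∏ l, hh c (ξ l) (w k)) := by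
  classical
  rw [Finset.prod_comm (f := fun j i => ff c (ξ j) (w i))]
  rw [← Finset.prod_mul_prod_compl S (fun j => ∏ l, hh c (u j) (ξ l))]
  have h2 : (∏ j ∈ Sᶜ, ∏ l, hh c (u j) (ξ l)) = ∏ j ∈ Sᶜ, ∏ l, hh c (w j) (ξ l) := by
    refine Finset.prod_congr rfl fun j hj => ?_
    rw [hu j, if_neg (mem_compl.mp hj)]
  rw [h2, mul_comm (∏ j ∈ S, ∏ l, hh c (u j) (ξ l)) _, mul_assoc]
  congr 1
  rw [← Finset.prod_mul_distrib]
  refine Finset.prod_congr rfl fun i hi => ?_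
  rw [hu i, if_pos hi, ← Finset.prod_mul_distrib]
  have : ∀ l, hh c (w i - c) (ξ l) * ff c (ξ l) (w i) = -1 * hh c (ξ l) (w i) := by
    intro l
    have hne : ξ l - w i ≠ 0 := fun h => h1 i l (by linear_combination -h)
    unfold hh ff
    field_simp
    ring
  rw [Finset.prod_congr rfl fun l _ => this l, Finset.prod_mul_distrib,
    Finset.prod_const, Finset.card_univ, Fintype.card_fin]

theorem weighted_partition_det (c : ℂ) (hc : c ≠ 0) (m : ℕ)
    (w ξ : Fin m → ℂ) (C1 C2 : ℂ → ℂ)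
    (hw : Function.Injective w) (hξ : Function.Injective ξ)
    (h1 : ∀ k j, w k - ξ j ≠ 0) (h2 : ∀ k j, w k - ξ j + c ≠ 0)
    (h3 : ∀ k j, w k - ξ j - c ≠ 0)
    (h4 : ∀ k k', k ≠ k' → w k - w k' ≠ c) :
    ∑ S : Finset (Fin m),
        KK c (fun i => if i ∈ S then w i - c else w i) ξ *
        (∏ j, ∏ i ∈ S, ff c (ξ j) (w i)) *
        (∏ i ∈ Sᶜ, ∏ i' ∈ S, ff c (w i) (w i')) *
        (∏ i ∈ S, C1 (w i)) * (∏ i ∈ Sᶜ, C2 (w i)) =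
      (∏ j, ∏ k ∈ univ.filter (fun k => j < k), gg c (ξ j) (ξ k)) *
      (∏ j, ∏ k ∈ univ.filter (fun k => k < j), gg c (w j) (w k)) *
      Matrix.det (Matrix.of fun j k =>
        C2 (w k) * tt c (w k) (ξ j) * (∏ l, hh c (w k) (ξ l)) +
        (-1 : ℂ) ^ m * C1 (w k) * tt c (ξ j) (w k) * (∏ l, hh c (ξ l) (w k))) := by
  classical
  have hM : (Matrix.of fun j k =>
        C2 (w k) * tt c (w k) (ξ j) * (∏ l, hh c (w k) (ξ l)) +
        (-1 : ℂ) ^ m * C1 (w k) * tt c (ξ j) (w k) * (∏ l, hh c (ξ l) (w k)))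
      = Matrix.transpose (Matrix.of fun k j =>
          (C2 (w k) * ∏ l, hh c (w k) (ξ l)) * tt c (w k) (ξ j) +
          ((-1 : ℂ) ^ m * C1 (w k) * ∏ l, hh c (ξ l) (w k)) * tt c (ξ j) (w k)) := by
    ext j k
    simp only [Matrix.transpose_apply, Matrix.of_apply]
    ring
  rw [hM, Matrix.det_transpose, det_split, Finset.mul_sum]
  have reindex : ∀ F : Finset (Fin m) → ℂ,
      (∑ s : Finset (Fin m), F s) = ∑ S : Finset (Fin m), F Sᶜ := fun F =>
    (Fintype.sum_bijective compl (Function.Involutive.bijective compl_compl)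
      (fun S => F Sᶜ) F (fun S => rfl)).symm
  rw [reindex (fun s =>
      (∏ j, ∏ k ∈ univ.filter (fun k => j < k), gg c (ξ j) (ξ k)) *
      (∏ j, ∏ k ∈ univ.filter (fun k => k < j), gg c (w j) (w k)) *
      ((∏ k ∈ s, C2 (w k) * ∏ l, hh c (w k) (ξ l)) *
        (∏ k ∈ sᶜ, (-1 : ℂ) ^ m * C1 (w k) * ∏ l, hh c (ξ l) (w k)) *
        Matrix.det (Matrix.of fun k j =>
          if k ∈ s then tt c (w k) (ξ j) else tt c (ξ j) (w k))))]
  refine Finset.sum_congr rfl fun S _ => ?_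
  simp only [compl_compl]
  set u : Fin m → ℂ := fun i => if i ∈ S then w i - c else w i with hu_def
  have hu : ∀ i, u i = if i ∈ S then w i - c else w i := fun i => rfl
  have hdet : Matrix.det (Matrix.of fun j k => tt c (u j) (ξ k))
      = Matrix.det (Matrix.of fun k j =>
          if k ∈ Sᶜ then tt c (w k) (ξ j) else tt c (ξ j) (w k)) := by
    congr 1
    ext k j
    simp only [Matrix.of_apply, mem_compl]
    by_cases hk : k ∈ S
    · rw [hu k, if_pos hk, if_neg (by simpa using hk), tt_shift]
    · rw [hu k, if_neg hk, if_pos hk]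
  have e1 := lem_one c w S hw h4 u hu
  have e2 := lem_two c hc w ξ S h1 u hu
  have e3 : (∏ j, ∏ k ∈ univ.filter (fun k => k < j), gg c (ξ j) (ξ k)) *
      (∏ j, ∏ k ∈ univ.filter (fun k => j < k), gg c (w j) (w k)) =
      (∏ j, ∏ k ∈ univ.filter (fun k => j < k), gg c (ξ j) (ξ k)) *
      (∏ j, ∏ k ∈ univ.filter (fun k => k < j), gg c (w j) (w k)) := by
    rw [lower_eq c ξ, lower_eq c w]
    ring
  have e4 : (∏ k ∈ Sᶜ, C2 (w k) * ∏ l, hh c (w k) (ξ l))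
      = (∏ k ∈ Sᶜ, C2 (w k)) * ∏ k ∈ Sᶜ, ∏ l, hh c (w k) (ξ l) :=
    Finset.prod_mul_distrib
  have e5 : (∏ k ∈ S, (-1 : ℂ) ^ m * C1 (w k) * ∏ l, hh c (ξ l) (w k))
      = (∏ k ∈ S, C1 (w k)) * ∏ k ∈ S, ((-1 : ℂ) ^ m * ∏ l, hh c (ξ l) (w k)) := by
    rw [← Finset.prod_mul_distrib]
    exact Finset.prod_congr rfl fun k _ => by ring
  rw [KK]
  rw [hdet, e4, e5]
  linear_combination
    (Matrix.det (Matrix.of fun k j =>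
        if k ∈ Sᶜ then tt c (w k) (ξ j) else tt c (ξ j) (w k)) *
      (∏ j, ∏ k ∈ univ.filter (fun k => k < j), gg c (ξ j) (ξ k)) *
      (∏ j, ∏ l, hh c (u j) (ξ l)) * (∏ j, ∏ i ∈ S, ff c (ξ j) (w i)) *
      (∏ i ∈ S, C1 (w i)) * (∏ i ∈ Sᶜ, C2 (w i))) * e1 +
    (Matrix.det (Matrix.of fun k j =>
        if k ∈ Sᶜ then tt c (w k) (ξ j) else tt c (ξ j) (w k)) *
      (∏ j, ∏ k ∈ univ.filter (fun k => j < k), gg c (w j) (w k)) *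
      (∏ j, ∏ k ∈ univ.filter (fun k => k < j), gg c (ξ j) (ξ k)) *
      (∏ i ∈ S, C1 (w i)) * (∏ i ∈ Sᶜ, C2 (w i))) * e2 +
    (Matrix.det (Matrix.of fun k j =>
        if k ∈ Sᶜ then tt c (w k) (ξ j) else tt c (ξ j) (w k)) *
      (∏ k ∈ Sᶜ, ∏ l, hh c (w k) (ξ l)) *
      (∏ k ∈ S, ((-1 : ℂ) ^ m * ∏ l, hh c (ξ l) (w k))) *
      (∏ i ∈ S, C1 (w i)) * (∏ i ∈ Sᶜ, C2 (w i))) * e3
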